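/- Let ℙ be an algebraic number field of degree m over ℚ with ring of integers 𝒪, and let H ≤ SL(n,𝒪). If Tr([H,H]), the subring of 𝒪 generated by 1 and the traces of elements of the commutator subgroup [H,H], is a complete ℤ-submodule of 𝒪 (i.e., has ℤ-rank m), then the set of maximal ideals I of 𝒪 for which the reduction φ_I(H) is a subfield (C5-) group of SL(n,𝒪/I) is finite. -/

import Mathlib

open Matrix

set_option synthInstance.maxHeartbeats 400000
set_option maxHeartbeats 1000000

noncomputable section

/-- `G ≤ SL(n, F)` is a subfield (`C5`-) group: there is a proper subfield `E` of `F`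
and `x ∈ GL(n, F)` such that every element of `xGx⁻¹` is a scalar multiple of a matrix
with all entries in `E`. -/
def IsSubfieldGroup {n : ℕ} {F : Type*} [CommRing F]
    (G : Subgroup (Matrix.SpecialLinearGroup (Fin n) F)) : Prop :=
  ∃ E : Subring F, E ≠ ⊤ ∧ (∀ y ∈ E, ∀ z : F, y * z = 1 → z ∈ E) ∧
    ∃ x : (Matrix (Fin n) (Fin n) F)ˣ,
      ∀ g ∈ G, ∃ c : F, ∃ m : Matrix (Fin n) (Fin n) F,
        (∀ i j, m i j ∈ E) ∧
        (x : Matrix (Fin n) (Fin n) F) * (g : Matrix (Fin n) (Fin n) F) *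
          ((x⁻¹ : (Matrix (Fin n) (Fin n) F)ˣ) : Matrix (Fin n) (Fin n) F) = c • m

/-- `Tr(S)`: the subring of the coefficient ring generated by (1 and) the traces of the
elements of a matrix group `S`. -/
def trRing {n : ℕ} {A : Type*} [CommRing A]
    (S : Subgroup (Matrix.SpecialLinearGroup (Fin n) A)) : Subring A :=
  Subring.closure {t : A | ∃ g ∈ S, Matrix.trace ((g : Matrix (Fin n) (Fin n) A)) = t}

section Aux

variable {F : Type*} [CommRing F] {n : ℕ}

lemma mulEnt (E : Subring F) {A B : Matrix (Fin n) (Fin n) F}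
    (hA : ∀ i j, A i j ∈ E) (hB : ∀ i j, B i j ∈ E) : ∀ i j, (A * B) i j ∈ E := by
  intro i j
  rw [Matrix.mul_apply]
  exact Subring.sum_mem _ fun k _ => E.mul_mem (hA i k) (hB k j)

lemma detEnt (E : Subring F) {A : Matrix (Fin n) (Fin n) F}
    (hA : ∀ i j, A i j ∈ E) : A.det ∈ E := by
  let A' : Matrix (Fin n) (Fin n) E := Matrix.of fun i j => (⟨A i j, hA i j⟩ : E)
  have hmap : E.subtype.mapMatrix A' = A := by ext i j; rfl
  rw [← hmap, ← RingHom.map_det]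
  exact (A'.det).2

lemma adjEnt (E : Subring F) {A : Matrix (Fin n) (Fin n) F}
    (hA : ∀ i j, A i j ∈ E) : ∀ i j, A.adjugate i j ∈ E := by
  let A' : Matrix (Fin n) (Fin n) E := Matrix.of fun i j => (⟨A i j, hA i j⟩ : E)
  have hmap : E.subtype.mapMatrix A' = A := by ext i j; rfl
  intro i j
  rw [← hmap, ← RingHom.map_adjugate]
  exact SetLike.coe_mem _

lemma trace_mem_of_mem_commutator (E : Subring F)
    (hEinv : ∀ y ∈ E, ∀ z : F, y * z = 1 → z ∈ E)
    (G : Subgroup (Matrix.SpecialLinearGroup (Fin n) F))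
    (x : (Matrix (Fin n) (Fin n) F)ˣ)
    (hx : ∀ g ∈ G, ∃ c : F, ∃ m : Matrix (Fin n) (Fin n) F,
        (∀ i j, m i j ∈ E) ∧
        (x : Matrix (Fin n) (Fin n) F) * (g : Matrix (Fin n) (Fin n) F) *
          ((x⁻¹ : (Matrix (Fin n) (Fin n) F)ˣ) : Matrix (Fin n) (Fin n) F) = c • m)
    {g : Matrix.SpecialLinearGroup (Fin n) F} (hg : g ∈ ⁅G, G⁆) :
    Matrix.trace (g : Matrix (Fin n) (Fin n) F) ∈ E := by
  set Φ : Matrix.SpecialLinearGroup (Fin n) F → Matrix (Fin n) (Fin n) F :=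
    fun g => (x : Matrix (Fin n) (Fin n) F) * (g : Matrix (Fin n) (Fin n) F) *
      ((x⁻¹ : (Matrix (Fin n) (Fin n) F)ˣ) : Matrix (Fin n) (Fin n) F) with hΦ
  have hΦmul : ∀ a b : Matrix.SpecialLinearGroup (Fin n) F, Φ (a * b) = Φ a * Φ b := by
    intro a b
    have h1 : ((x⁻¹ : (Matrix (Fin n) (Fin n) F)ˣ) : Matrix (Fin n) (Fin n) F) *
        ((x : Matrix (Fin n) (Fin n) F)) = 1 := x.inv_mul
    simp only [hΦ, Matrix.SpecialLinearGroup.coe_mul, mul_assoc]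
    rw [← mul_assoc ((x⁻¹ : (Matrix (Fin n) (Fin n) F)ˣ) : Matrix (Fin n) (Fin n) F)
      (x : Matrix (Fin n) (Fin n) F), h1, one_mul]
  have hΦone : Φ 1 = 1 := by
    simp only [hΦ, Matrix.SpecialLinearGroup.coe_one, mul_one]
    exact x.mul_inv
  have hdet : ∀ a : Matrix.SpecialLinearGroup (Fin n) F, (Φ a).det = 1 := by
    intro a
    have h1 : ((x : Matrix (Fin n) (Fin n) F) *
        ((x⁻¹ : (Matrix (Fin n) (Fin n) F)ˣ) : Matrix (Fin n) (Fin n) F)).det = 1 := by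
      rw [x.mul_inv, Matrix.det_one]
    rw [hΦ]
    simp only [Matrix.det_mul] at h1 ⊢
    rw [a.prop]
    ring_nf
    ring_nf at h1
    rw [mul_comm] at h1 ⊢
    simpa using h1
  have hΦinv : ∀ a : Matrix.SpecialLinearGroup (Fin n) F, Φ a⁻¹ = (Φ a).adjugate := by
    intro a
    have h2 : Φ a * Φ a⁻¹ = 1 := by rw [← hΦmul, mul_inv_cancel, hΦone]
    calc Φ a⁻¹ = 1 * Φ a⁻¹ := (one_mul _).symm
      _ = ((Φ a).adjugate * Φ a) * Φ a⁻¹ := by rw [Matrix.adjugate_mul, hdet a, one_smul]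
      _ = (Φ a).adjugate * (Φ a * Φ a⁻¹) := by rw [mul_assoc]
      _ = (Φ a).adjugate := by rw [h2, mul_one]
  let K : Subgroup (Matrix.SpecialLinearGroup (Fin n) F) :=
  { carrier := {a | ∀ i j, Φ a i j ∈ E}
    one_mem' := by
      intro i j
      rw [hΦone, Matrix.one_apply]
      split_ifs
      · exact E.one_mem
      · exact E.zero_mem
    mul_mem' := by
      intro a b ha hb i j
      rw [hΦmul]
      exact mulEnt E ha hb i j
    inv_mem' := by
      intro a ha i j
      rw [hΦinv]
      exact adjEnt E ha i j }
  have hKcomm : ⁅G, G⁆ ≤ K := by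
    rw [Subgroup.commutator_le]
    intro g₁ h₁ g₂ h₂
    obtain ⟨c, m, hm, hc⟩ := hx g₁ h₁
    obtain ⟨d, k, hk, hd⟩ := hx g₂ h₂
    have hc' : Φ g₁ = c • m := hc
    have hd' : Φ g₂ = d • k := hd
    letI : Bracket (Matrix.SpecialLinearGroup (Fin n) F) (Matrix.SpecialLinearGroup (Fin n) F) :=
      commutatorElement
    show ∀ i j, Φ ⁅g₁, g₂⁆ i j ∈ E
    have hΦc : Φ ⁅g₁, g₂⁆ = (c • m) * (d • k) * (c • m).adjugate * (d • k).adjugate := by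
      rw [commutatorElement_def, hΦmul, hΦmul, hΦmul, hΦinv, hΦinv, hc', hd']
    have hdc : c ^ n * m.det = 1 := by
      have h := hdet g₁
      rw [hc', Matrix.det_smul, Fintype.card_fin] at h
      exact h
    have hdd : d ^ n * k.det = 1 := by
      have h := hdet g₂
      rw [hd', Matrix.det_smul, Fintype.card_fin] at h
      exact h
    have hcE : c ^ n ∈ E := hEinv m.det (detEnt E hm) _ (by rw [mul_comm]; exact hdc)
    have hdE : d ^ n ∈ E := hEinv k.det (detEnt E hk) _ (by rw [mul_comm]; exact hdd)
    intro i j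
    have hn : n ≠ 0 := by rintro rfl; exact i.elim0
    obtain ⟨n', rfl⟩ : ∃ n', n = n' + 1 :=
      ⟨n - 1, (Nat.succ_pred_eq_of_pos (Nat.pos_of_ne_zero hn)).symm⟩
    rw [hΦc, Matrix.adjugate_smul, Matrix.adjugate_smul, Fintype.card_fin]
    have hexp : (c • m) * (d • k) * (c ^ (n' + 1 - 1) • m.adjugate) *
        (d ^ (n' + 1 - 1) • k.adjugate) =
        (c ^ (n' + 1) * d ^ (n' + 1)) • (m * k * m.adjugate * k.adjugate) := by
      simp only [Nat.add_sub_cancel, smul_mul_assoc, mul_smul_comm, smul_smul]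
      congr 1
      ring
    rw [hexp, Matrix.smul_apply, smul_eq_mul]
    exact E.mul_mem (E.mul_mem hcE hdE)
      (mulEnt E (mulEnt E (mulEnt E hm hk) (adjEnt E hm)) (adjEnt E hk) i j)
  have hgK : ∀ i j, Φ g i j ∈ E := hKcomm hg
  rw [← Matrix.trace_units_conj x (g : Matrix (Fin n) (Fin n) F), Matrix.trace]
  exact Subring.sum_mem _ fun i _ => hgK i i

lemma intModule_eq {M : Type*} [AddCommGroup M] (i1 i2 : Module ℤ M) : i1 = i2 := by
  letI u := AddCommGroup.uniqueIntModule (M := M)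
  rw [u.uniq i1, u.uniq i2]

lemma finrank_int_congr {M : Type*} [AddCommGroup M] (i1 i2 : Module ℤ M) :
    @Module.finrank ℤ M _ _ i1 = @Module.finrank ℤ M _ _ i2 := by rw [intModule_eq i1 i2]

lemma exists_int_annihilator {O : Type*} [CommRing O] [Module.Finite ℤ O]
    (M : Submodule ℤ O) (hM : Module.finrank ℤ ↥M = Module.finrank ℤ O) :
    ∃ N : ℤ, N ≠ 0 ∧ ∀ x : O, (N : O) * x ∈ M := by
  classical
  letI iM : Module ℤ ↥M := Submodule.module M
  letI iQ : Module ℤ (O ⧸ M) := Submodule.Quotient.module M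
  haveI : IsNoetherian ℤ O := isNoetherian_of_isNoetherianRing_of_finite ℤ O
  haveI hN2 : IsNoetherian ℤ ↥M := isNoetherian_submodule' M
  haveI hf1 : Module.Finite ℤ ↥M := inferInstance
  haveI hNQ : IsNoetherian ℤ (O ⧸ M) := isNoetherian_quotient M
  haveI hfQ : Module.Finite ℤ (O ⧸ M) := inferInstance
  have hM' : Module.finrank ℤ ↥M = Module.finrank ℤ O := by
    rw [finrank_int_congr iM (AddCommGroup.toIntModule ↥M)]; exact hM
  have h := Submodule.rank_quotient_add_rank M
  rw [← Module.finrank_eq_rank ℤ O, ← Module.finrank_eq_rank ℤ ↥M] at h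
  rw [hM'] at h
  obtain ⟨q, hq⟩ := Cardinal.lt_aleph0.mp
    (lt_of_le_of_lt (le_of_le_of_eq le_self_add h) (Cardinal.nat_lt_aleph0 _))
  rw [hq] at h
  have hq' : q + Module.finrank ℤ O = Module.finrank ℤ O := by exact_mod_cast h
  have hq0 : q = 0 := by omega
  rw [hq0] at hq
  have htor := rank_eq_zero_iff.mp (by exact_mod_cast hq)
  obtain ⟨s, hs⟩ := Module.Finite.fg_top (R := ℤ) (M := O ⧸ M)
  choose a ha1 ha2 using htor
  refine ⟨∏ y ∈ s, a y, Finset.prod_ne_zero_iff.mpr fun y _ => ha1 y, ?_⟩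
  intro z
  have hsub : (⊤ : Submodule ℤ (O ⧸ M)) ≤ Submodule.torsionBy ℤ (O ⧸ M) (∏ y ∈ s, a y) := by
    rw [← hs, Submodule.span_le]
    intro y hy
    rw [SetLike.mem_coe, Submodule.mem_torsionBy_iff, ← Finset.prod_erase_mul s a hy,
      mul_smul (∏ x ∈ s.erase y, a x) (a y) y, ha2 y, smul_zero]
  have hmem := (Submodule.mem_torsionBy_iff _ _).mp (hsub (Submodule.mem_top
    (x := Submodule.Quotient.mk z)))
  rw [← Submodule.Quotient.mk_smul, Submodule.Quotient.mk_eq_zero] at hmem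
  rwa [← zsmul_eq_mul]

end Aux

/-- If `Tr([H,H])` is a complete `ℤ`-submodule of `𝒪` (of `ℤ`-rank `m = [ℙ:ℚ]`), then
the set of maximal ideals `I` of `𝒪` modulo which `H` reduces to a subfield (`C5`-)
group is finite. -/
theorem finite_subfieldGroup_primes_of_trRing_complete
    (P : Type*) [Field P] [NumberField P] (n : ℕ)
    (H : Subgroup (Matrix.SpecialLinearGroup (Fin n) ↥(integralClosure ℤ P)))
    (hcomplete : Module.finrank ℤ ↥(trRing ⁅H, H⁆) = Module.finrank ℚ P) :
    {I : Ideal ↥(integralClosure ℤ P) | I.IsMaximal ∧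
      IsSubfieldGroup
        (H.map (Matrix.SpecialLinearGroup.map (Ideal.Quotient.mk I)))}.Finite := by
  classical
  haveI : Module.Finite ℤ ↥(integralClosure ℤ P) :=
    IsIntegralClosure.finite ℤ ℚ P ↥(integralClosure ℤ P)
  haveI : IsDedekindDomain ↥(integralClosure ℤ P) :=
    IsIntegralClosure.isDedekindDomain ℤ ℚ P ↥(integralClosure ℤ P)
  have hrank : Module.finrank ℤ ↥(integralClosure ℤ P) = Module.finrank ℚ P :=
    IsIntegralClosure.rank ℤ ℚ P ↥(integralClosure ℤ P)
  set M : Submodule ℤ ↥(integralClosure ℤ P) :=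
    AddSubgroup.toIntSubmodule (trRing ⁅H, H⁆).toAddSubgroup with hMdef
  have e : ↥(trRing ⁅H, H⁆) ≃+ ↥M :=
  { toFun := fun a => ⟨a.1, a.2⟩
    invFun := fun a => ⟨a.1, a.2⟩
    left_inv := fun _ => rfl
    right_inv := fun _ => rfl
    map_add' := fun _ _ => rfl }
  have hfr : Module.finrank ℤ ↥(trRing ⁅H, H⁆) = Module.finrank ℤ ↥M :=
    e.toIntLinearEquiv.finrank_eq
  have hMfin : Module.finrank ℤ ↥M = Module.finrank ℤ ↥(integralClosure ℤ P) := by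
    rw [← hfr, hcomplete, hrank]
  obtain ⟨N, hN0, hN⟩ := exists_int_annihilator M hMfin
  have hNR : ∀ z : ↥(integralClosure ℤ P), (N : ↥(integralClosure ℤ P)) * z ∈ trRing ⁅H, H⁆ := by
    intro z
    have h2 : ((N : ↥(integralClosure ℤ P)) * z) ∈
        ((AddSubgroup.toIntSubmodule (trRing ⁅H, H⁆).toAddSubgroup :
          Submodule ℤ ↥(integralClosure ℤ P)) : Set ↥(integralClosure ℤ P)) := hN z
    rw [AddSubgroup.coe_toIntSubmodule] at h2
    exact h2
  set a : ↥(integralClosure ℤ P) := (N : ↥(integralClosure ℤ P)) with hadef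
  haveI : CharZero ↥(integralClosure ℤ P) :=
    ⟨fun p q h => Nat.cast_injective (R := P) (by exact_mod_cast congrArg Subtype.val h)⟩
  have haz : a ≠ 0 := Int.cast_ne_zero.mpr hN0
  have hfin := Ideal.finite_factors (R := ↥(integralClosure ℤ P)) (I := Ideal.span {a})
    (by simpa [Ne, Ideal.span_singleton_eq_bot] using haz)
  apply Set.Finite.subset (hfin.image IsDedekindDomain.HeightOneSpectrum.asIdeal)
  rintro I ⟨hImax, E, hEtop, hEinv, x, hx⟩
  have haI : a ∈ I := by
    by_contra haI
    apply hEtop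
    have hsub : trRing ⁅H, H⁆ ≤ E.comap (Ideal.Quotient.mk I) := by
      refine Subring.closure_le.mpr ?_
      rintro t ⟨g, hg, rfl⟩
      show (Ideal.Quotient.mk I) (Matrix.trace (g : Matrix (Fin n) (Fin n) _)) ∈ E
      have hmem : (Matrix.SpecialLinearGroup.map (Ideal.Quotient.mk I)) g ∈
          ⁅H.map (Matrix.SpecialLinearGroup.map (Ideal.Quotient.mk I)),
            H.map (Matrix.SpecialLinearGroup.map (Ideal.Quotient.mk I))⁆ := by
        rw [← Subgroup.map_commutator]
        exact Subgroup.mem_map_of_mem _ hg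
      have htr := trace_mem_of_mem_commutator E hEinv
        (H.map (Matrix.SpecialLinearGroup.map (Ideal.Quotient.mk I))) x hx hmem
      have heq : Matrix.trace
          (((Matrix.SpecialLinearGroup.map (Ideal.Quotient.mk I)) g :
            Matrix.SpecialLinearGroup (Fin n) _) : Matrix (Fin n) (Fin n) _) =
          (Ideal.Quotient.mk I) (Matrix.trace (g : Matrix (Fin n) (Fin n) _)) := by
        simp [Matrix.trace, Matrix.diag, map_sum, RingHom.mapMatrix_apply, Matrix.map_apply]
      rwa [heq] at htr
    have haE : (Ideal.Quotient.mk I) a ∈ E := by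
      have h1 : a ∈ trRing ⁅H, H⁆ := by
        have := hNR 1
        rwa [mul_one] at this
      exact hsub h1
    obtain ⟨y, i, hi, hyi⟩ := hImax.exists_inv haI
    have hy1 : (Ideal.Quotient.mk I) a * (Ideal.Quotient.mk I) y = 1 := by
      have h2 := congrArg (Ideal.Quotient.mk I) hyi
      rw [map_add, _root_.map_mul, _root_.map_one, Ideal.Quotient.eq_zero_iff_mem.mpr hi, add_zero] at h2
      rw [mul_comm]
      exact h2
    have hyE : (Ideal.Quotient.mk I) y ∈ E := hEinv _ haE _ hy1
    rw [Subring.eq_top_iff']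
    intro w
    obtain ⟨z, rfl⟩ := Ideal.Quotient.mk_surjective w
    have hz : (Ideal.Quotient.mk I) (a * z) ∈ E := hsub (hNR z)
    have hzz : (Ideal.Quotient.mk I) z =
        (Ideal.Quotient.mk I) y * (Ideal.Quotient.mk I) (a * z) := by
      rw [_root_.map_mul, ← mul_assoc, mul_comm ((Ideal.Quotient.mk I) y), hy1, one_mul]
    rw [hzz]
    exact E.mul_mem hyE hz
  refine ⟨⟨I, hImax.isPrime, ?_⟩, ?_, rfl⟩
  · intro hbot
    rw [hbot] at haI
    exact haz ((Submodule.mem_bot _).mp haI)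
  · exact Ideal.dvd_iff_le.mpr ((Ideal.span_singleton_le_iff_mem _).mpr haI)
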